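/- arXiv:2002.05993 — 2 statements merged into one kernel-verified Lean document; each statement's English description precedes it below -/
import Mathlib

section
/- There exists an ℝ-algebra isomorphism from the Clifford algebra of the degenerate quadratic form Q_P onto the subalgebra CGA₀ of CGA which sends the Clifford generator ι_P(e₀) to ι(e₀) and ι_P(eᵢ) to ι(eᵢ) for i = 1, 2, 3; in other words, PGA is isomorphic, as an ℝ-algebra, to the subalgebra CGA₀ of CGA. -/
open CliffordAlgebra
open scoped TensorProduct

/-- The matrix of the CGA inner product on `V = ℝ⁵`; indices `0, 1, 2, 3, 4`
correspond to the basis `e₀, e₁, e₂, e₃, e∞`. -/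
def Bmat : Matrix (Fin 5) (Fin 5) ℝ :=
  !![0, 0, 0, 0, -1;
     0, 1, 0, 0, 0;
     0, 0, 1, 0, 0;
     0, 0, 0, 1, 0;
     -1, 0, 0, 0, 0]

/-- The CGA quadratic form
`Q(a e₀ + x₁e₁ + x₂e₂ + x₃e₃ + b e∞) = x₁² + x₂² + x₃² − 2ab`. -/
noncomputable def Q : QuadraticForm ℝ (Fin 5 → ℝ) := Bmat.toQuadraticMap'

/-- The basis vectors of `V = ℝ⁵`: `e 0 = e₀`, `e 1, e 2, e 3` Euclidean, `e 4 = e∞`. -/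
def e (i : Fin 5) : Fin 5 → ℝ := Pi.single i 1

/-- The linear map `♯ : V → V` fixing `e₁, e₂, e₃` and sending `e₀ ↦ -e∞`, `e∞ ↦ -e₀`. -/
def sharpV : (Fin 5 → ℝ) →ₗ[ℝ] (Fin 5 → ℝ) where
  toFun v i := if i = 0 then -(v 4) else if i = 4 then -(v 0) else v i
  map_add' u v := by
    funext i
    by_cases h : i = 0 <;> by_cases h' : i = 4 <;> simp [h, h'] <;> ring
  map_smul' c v := by
    funext i
    by_cases h : i = 0 <;> by_cases h' : i = 4 <;> simp [h, h'] <;> ring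

/-- The subalgebra `CGA₀` of CGA generated by `ι(e₀), ι(e₁), ι(e₂), ι(e₃)`. -/
noncomputable def CGA₀ : Subalgebra ℝ (CliffordAlgebra Q) :=
  Algebra.adjoin ℝ {ι Q (e 0), ι Q (e 1), ι Q (e 2), ι Q (e 3)}

/-- The matrix of the degenerate PGA quadratic form (signature `(3,0,1)`);
indices `0, 1, 2, 3` correspond to the basis `e₀, e₁, e₂, e₃` of `ℝ⁴`. -/
def BmatP : Matrix (Fin 4) (Fin 4) ℝ :=
  !![0, 0, 0, 0;
     0, 1, 0, 0;
     0, 0, 1, 0;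
     0, 0, 0, 1]

/-- The PGA quadratic form `Q_P(a e₀ + x₁e₁ + x₂e₂ + x₃e₃) = x₁² + x₂² + x₃²`. -/
noncomputable def QP : QuadraticForm ℝ (Fin 4 → ℝ) := BmatP.toQuadraticMap'

noncomputable def Q3 : QuadraticForm ℝ (Fin 3 → ℝ) := (1 : Matrix (Fin 3) (Fin 3) ℝ).toQuadraticMap'
noncomputable def QH : QuadraticForm ℝ (Fin 2 → ℝ) := (!![0,-1;-1,0] : Matrix (Fin 2) (Fin 2) ℝ).toQuadraticMap'
noncomputable def Q0 : QuadraticForm ℝ (Fin 1 → ℝ) := 0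

lemma Q_apply (v : Fin 5 → ℝ) :
    Q v = v 1 * v 1 + v 2 * v 2 + v 3 * v 3 - 2 * (v 0 * v 4) := by
  simp [Q, Bmat, Matrix.toQuadraticMap', Matrix.toQuadraticForm', LinearMap.BilinMap.toQuadraticMap_apply,
    Matrix.toLinearMap₂'_apply, Fin.sum_univ_five, Matrix.vecHead, Matrix.vecTail]
  ring

lemma QP_apply (v : Fin 4 → ℝ) :
    QP v = v 1 * v 1 + v 2 * v 2 + v 3 * v 3 := by
  simp [QP, BmatP, Matrix.toQuadraticMap', Matrix.toQuadraticForm', LinearMap.BilinMap.toQuadraticMap_apply,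
    Matrix.toLinearMap₂'_apply, Fin.sum_univ_four, Matrix.vecHead, Matrix.vecTail]

lemma Q3_apply (v : Fin 3 → ℝ) :
    Q3 v = v 0 * v 0 + v 1 * v 1 + v 2 * v 2 := by
  simp [Q3, Matrix.toQuadraticMap', Matrix.toQuadraticForm', LinearMap.BilinMap.toQuadraticMap_apply,
    Matrix.toLinearMap₂'_apply, Fin.sum_univ_three, Matrix.one_apply]

lemma QH_apply (v : Fin 2 → ℝ) :
    QH v = -2 * (v 0 * v 1) := by
  simp [QH, Matrix.toQuadraticMap', Matrix.toQuadraticForm', LinearMap.BilinMap.toQuadraticMap_apply,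
    Matrix.toLinearMap₂'_apply, Fin.sum_univ_two, Matrix.vecHead, Matrix.vecTail]
  ring

/-- pad a 4-vector to a 5-vector, zero last coordinate -/
def padL : (Fin 4 → ℝ) →ₗ[ℝ] (Fin 5 → ℝ) where
  toFun v := ![v 0, v 1, v 2, v 3, 0]
  map_add' u v := by funext i; fin_cases i <;> simp
  map_smul' c v := by funext i; fin_cases i <;> simp

noncomputable def F0 : QP →qᵢ Q where
  toLinearMap := padL
  map_app' v := by
    show Q ![v 0, v 1, v 2, v 3, 0] = QP v
    rw [Q_apply, QP_apply]
    change v 1 * v 1 + v 2 * v 2 + v 3 * v 3 - 2 * (v 0 * 0) = _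
    ring

noncomputable def split5 : (Fin 5 → ℝ) ≃ₗ[ℝ] (Fin 3 → ℝ) × (Fin 2 → ℝ) where
  toFun v := (![v 1, v 2, v 3], ![v 0, v 4])
  invFun p := ![p.2 0, p.1 0, p.1 1, p.1 2, p.2 1]
  map_add' u v := by
    refine Prod.ext ?_ ?_ <;> funext i <;> fin_cases i <;> simp
  map_smul' c v := by
    refine Prod.ext ?_ ?_ <;> funext i <;> fin_cases i <;> simp
  left_inv v := by funext i; fin_cases i <;> simp
  right_inv p := by refine Prod.ext ?_ ?_ <;> funext i <;> fin_cases i <;> simp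

noncomputable def split4 : (Fin 4 → ℝ) ≃ₗ[ℝ] (Fin 3 → ℝ) × (Fin 1 → ℝ) where
  toFun v := (![v 1, v 2, v 3], ![v 0])
  invFun p := ![p.2 0, p.1 0, p.1 1, p.1 2]
  map_add' u v := by
    refine Prod.ext ?_ ?_ <;> funext i <;> fin_cases i <;> simp
  map_smul' c v := by
    refine Prod.ext ?_ ?_ <;> funext i <;> fin_cases i <;> simp
  left_inv v := by funext i; fin_cases i <;> simp
  right_inv p := by refine Prod.ext ?_ ?_ <;> funext i <;> fin_cases i <;> simp

noncomputable def e2iso : Q.IsometryEquiv (Q3.prod QH) :=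
  { split5 with
    map_app' := fun v => by
      show Q3 ![v 1, v 2, v 3] + QH ![v 0, v 4] = Q v
      rw [Q_apply, Q3_apply, QH_apply]
      change v 1 * v 1 + v 2 * v 2 + v 3 * v 3 + -2 * (v 0 * v 4) = _
      ring }

noncomputable def e1iso : QP.IsometryEquiv (Q3.prod Q0) :=
  { split4 with
    map_app' := fun v => by
      show Q3 ![v 1, v 2, v 3] + Q0 ![v 0] = QP v
      rw [QP_apply, Q3_apply]
      simp [Q0] }

noncomputable def jiso : Q0 →qᵢ QH where
  toFun w := ![w 0, 0]
  map_add' u v := by funext i; fin_cases i <;> simp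
  map_smul' c v := by funext i; fin_cases i <;> simp
  map_app' w := by
    show QH ![w 0, 0] = Q0 w
    rw [QH_apply]
    simp [Q0]

noncomputable def Fmid : (Q3.prod Q0) →qᵢ (Q3.prod QH) where
  toLinearMap := LinearMap.prodMap LinearMap.id jiso.toLinearMap
  map_app' m := by
    show (Q3.prod QH) (m.1, jiso m.2) = (Q3.prod Q0) m
    simp only [QuadraticMap.prod_apply]
    rw [jiso.map_app]

lemma map_mem_evenOdd {R M₁ M₂ : Type*} [CommRing R] [AddCommGroup M₁] [AddCommGroup M₂]
    [Module R M₁] [Module R M₂] {Q₁ : QuadraticForm R M₁} {Q₂ : QuadraticForm R M₂}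
    (f : Q₁ →qᵢ Q₂) {i : ZMod 2} {x} (hx : x ∈ evenOdd Q₁ i) :
    CliffordAlgebra.map f x ∈ evenOdd Q₂ i := by
  have h : Submodule.map (CliffordAlgebra.map f).toLinearMap (evenOdd Q₁ i) ≤ evenOdd Q₂ i := by
    rw [evenOdd, evenOdd, Submodule.map_iSup]
    refine iSup_le fun n => ?_
    rw [Submodule.map_pow, ι_range_map_map]
    exact le_trans (pow_le_pow_left' (LinearMap.map_le_range) (n : ℕ))
      (le_iSup (fun j : {n : ℕ // (n : ZMod 2) = i} => LinearMap.range (ι Q₂) ^ (j : ℕ)) n)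
  exact h (Submodule.mem_map_of_mem hx)

def E1 : Fin 1 → ℝ := ![1]

lemma clQ0_span (x : CliffordAlgebra Q0) : ∃ a b : ℝ, x = a • 1 + b • ι Q0 E1 := by
  induction x using CliffordAlgebra.induction with
  | algebraMap r => exact ⟨r, 0, by simp [Algebra.algebraMap_eq_smul_one]⟩
  | ι v =>
    refine ⟨0, v 0, ?_⟩
    have hv : v = v 0 • E1 := by
      funext i
      fin_cases i
      simp [E1]
    have h2 : ι Q0 v = v 0 • ι Q0 E1 := by rw [← map_smul, ← hv]
    rw [h2, zero_smul, zero_add]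
  | mul x y hx hy =>
    obtain ⟨a, b, rfl⟩ := hx
    obtain ⟨c, d, rfl⟩ := hy
    refine ⟨a * c, a * d + b * c, ?_⟩
    have h0 : ι Q0 E1 * ι Q0 E1 = 0 := by
      rw [ι_sq_scalar, show Q0 E1 = 0 from rfl, map_zero]
    simp only [mul_add, add_mul, smul_mul_smul_comm, h0, smul_zero, one_mul, mul_one, add_zero]
    module
  | add x y hx hy =>
    obtain ⟨a, b, rfl⟩ := hx
    obtain ⟨c, d, rfl⟩ := hy
    exact ⟨a + c, b + d, by rw [add_smul, add_smul]; abel⟩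

lemma mapj_inj : Function.Injective (CliffordAlgebra.map jiso) := by
  letI : Invertible (2 : ℝ) := invertibleOfNonzero two_ne_zero
  rw [injective_iff_map_eq_zero]
  intro x hx
  obtain ⟨a, b, rfl⟩ := clQ0_span x
  rw [map_add, map_smul, map_smul, map_one, CliffordAlgebra.map_apply_ι] at hx
  set u : Fin 2 → ℝ := jiso E1 with hu
  have hmem0 : a • (1 : CliffordAlgebra QH) ∈ evenOdd QH 0 :=
    Submodule.smul_mem _ _ (Submodule.one_le.1 (one_le_evenOdd_zero QH))
  have hmem1 : b • ι QH u ∈ evenOdd QH 1 :=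
    Submodule.smul_mem _ _ (ι_mem_evenOdd_one QH u)
  have heq : a • (1 : CliffordAlgebra QH) = -(b • ι QH u) := by
    rw [← add_eq_zero_iff_eq_neg, hx]
  have hzero : a • (1 : CliffordAlgebra QH) = 0 := by
    refine (Submodule.disjoint_def.mp (evenOdd_isCompl QH).disjoint) _ hmem0 ?_
    rw [heq]
    exact Submodule.neg_mem _ hmem1
  have hzero1 : b • ι QH u = 0 := by
    rw [heq] at hzero
    rw [← neg_neg (b • ι QH u), hzero, neg_zero]
  have ha : a = 0 := by
    rcases smul_eq_zero.mp hzero with h | h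
    · exact h
    · exact absurd h one_ne_zero
  have hune : ι QH u ≠ 0 := by
    intro hiu
    have h2 : (equivExterior QH) (ι QH u) = ExteriorAlgebra.ι ℝ u :=
      changeForm_ι (changeForm.associated_neg_proof (Q := QH)) u
    rw [hiu, map_zero] at h2
    have h3 : u = 0 := (ExteriorAlgebra.ι_eq_zero_iff (R := ℝ) u).mp h2.symm
    have : u 0 = 1 := rfl
    rw [h3] at this
    simp at this
  have hb : b = 0 := by
    rcases smul_eq_zero.mp hzero1 with h | h
    · exact h
    · exact absurd h hune
  rw [ha, hb, zero_smul, zero_smul, add_zero]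

noncomputable def phi : (evenOdd Q3 ᵍ⊗[ℝ] evenOdd Q0) →ₐ[ℝ] (evenOdd Q3 ᵍ⊗[ℝ] evenOdd QH) :=
  GradedTensorProduct.lift _ _
    (GradedTensorProduct.includeLeft (evenOdd Q3) (evenOdd QH))
    ((GradedTensorProduct.includeRight (evenOdd Q3) (evenOdd QH)).comp
      (CliffordAlgebra.map jiso))
    (fun i j a b => by
      rw [GradedTensorProduct.includeLeft_apply, AlgHom.comp_apply,
        GradedTensorProduct.includeRight_apply]
      rw [GradedTensorProduct.tmul_one_mul_one_tmul]
      have h2 := GradedTensorProduct.tmul_coe_mul_coe_tmul (evenOdd Q3) (evenOdd QH)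
        (1 : CliffordAlgebra Q3)
        (⟨_, map_mem_evenOdd jiso b.prop⟩ : evenOdd QH j)
        a (1 : CliffordAlgebra QH)
      rw [h2, one_mul, mul_one, smul_smul, Int.units_mul_self, one_smul])

lemma phi_tmul (a : CliffordAlgebra Q3) (b : CliffordAlgebra Q0) :
    phi (a ᵍ⊗ₜ[ℝ] b) = a ᵍ⊗ₜ[ℝ] CliffordAlgebra.map jiso b := by
  rw [phi, GradedTensorProduct.lift_tmul, GradedTensorProduct.includeLeft_apply,
    AlgHom.comp_apply, GradedTensorProduct.includeRight_apply,
    GradedTensorProduct.tmul_one_mul_one_tmul]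

lemma phi_inj : Function.Injective phi := by
  have hinj : Function.Injective
      (LinearMap.lTensor (CliffordAlgebra Q3) (CliffordAlgebra.map jiso).toLinearMap) :=
    Module.Flat.lTensor_preserves_injective_linearMap _ mapj_inj
  have hphiL : phi.toLinearMap =
      ((GradedTensorProduct.of ℝ (evenOdd Q3) (evenOdd QH)) :
          CliffordAlgebra Q3 ⊗[ℝ] CliffordAlgebra QH →ₗ[ℝ] _) ∘ₗ
        (LinearMap.lTensor (CliffordAlgebra Q3) (CliffordAlgebra.map jiso).toLinearMap) ∘ₗ
        ((GradedTensorProduct.of ℝ (evenOdd Q3) (evenOdd Q0)).symm :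
          _ →ₗ[ℝ] CliffordAlgebra Q3 ⊗[ℝ] CliffordAlgebra Q0) := by
    refine GradedTensorProduct.hom_ext (R := ℝ) (𝒜 := evenOdd Q3) (ℬ := evenOdd Q0) ?_
    refine TensorProduct.ext' fun a b => ?_
    show phi (a ᵍ⊗ₜ[ℝ] b) = _
    rw [phi_tmul]
    simp only [LinearMap.comp_apply, LinearEquiv.coe_coe, GradedTensorProduct.of_symm_of,
      LinearMap.lTensor_tmul]
    rfl
  intro x y hxy
  have h1 : phi.toLinearMap x = phi.toLinearMap y := hxy
  rw [hphiL] at h1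
  simp only [LinearMap.comp_apply, LinearEquiv.coe_coe] at h1
  have h2 := hinj ((GradedTensorProduct.of ℝ (evenOdd Q3) (evenOdd QH)).injective h1)
  exact (GradedTensorProduct.of ℝ (evenOdd Q3) (evenOdd Q0)).symm.injective h2

lemma square2 : (ofProd Q3 QH).comp (CliffordAlgebra.map Fmid) =
    phi.comp (ofProd Q3 Q0) := by
  refine CliffordAlgebra.hom_ext (LinearMap.ext fun m => ?_)
  show (ofProd Q3 QH) (CliffordAlgebra.map Fmid (ι _ m)) = phi ((ofProd Q3 Q0) (ι _ m))
  obtain ⟨m1, m2⟩ := m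
  rw [CliffordAlgebra.map_apply_ι]
  show (ofProd Q3 QH) (ι _ (m1, jiso m2)) = phi ((ofProd Q3 Q0) (ι _ (m1, m2)))
  rw [ofProd_ι_mk, ofProd_ι_mk, map_add, phi_tmul, phi_tmul, map_one,
    CliffordAlgebra.map_apply_ι]

lemma mapFmid_inj : Function.Injective (CliffordAlgebra.map Fmid) := by
  intro x y hxy
  have h := congrArg (ofProd Q3 QH) hxy
  rw [← AlgHom.comp_apply, ← AlgHom.comp_apply, square2, AlgHom.comp_apply,
    AlgHom.comp_apply] at h
  exact (prodEquiv Q3 Q0).injective (phi_inj h)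

lemma iso_comm : Fmid.comp e1iso.toIsometry = e2iso.toIsometry.comp F0 := by
  refine DFunLike.ext _ _ fun v => ?_
  show Fmid (split4 v) = split5 (padL v)
  refine Prod.ext ?_ ?_ <;> funext k <;> fin_cases k <;> rfl

lemma mapF0_inj : Function.Injective (CliffordAlgebra.map F0) := by
  intro x y hxy
  have h : CliffordAlgebra.map Fmid (CliffordAlgebra.map e1iso.toIsometry x) =
      CliffordAlgebra.map Fmid (CliffordAlgebra.map e1iso.toIsometry y) := by
    rw [← AlgHom.comp_apply, ← AlgHom.comp_apply, map_comp_map, iso_comm, ← map_comp_map,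
      AlgHom.comp_apply, AlgHom.comp_apply, hxy]
  have h2 := mapFmid_inj h
  have h3 : Function.Injective (CliffordAlgebra.map e1iso.toIsometry) := by
    intro u v huv
    refine (equivOfIsometry e1iso).injective ?_
    rw [equivOfIsometry_apply, equivOfIsometry_apply]
    exact huv
  exact h3 h2

lemma pad_single (i : Fin 4) :
    F0 (Pi.single i 1) = Pi.single (Fin.castLE (by norm_num) i) 1 := by
  show padL (Pi.single i 1) = _
  funext k
  fin_cases i <;> fin_cases k <;> simp [padL, Pi.single_apply, Fin.ext_iff, Fin.castLE] <;>
    (try rfl) <;> rw [if_neg (by decide)]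

lemma range_mapF0 : (CliffordAlgebra.map F0).range = CGA₀ := by
  apply le_antisymm
  · rintro z hz
    obtain ⟨x, rfl⟩ := hz
    show CliffordAlgebra.map F0 x ∈ CGA₀
    induction x using CliffordAlgebra.induction with
    | algebraMap r =>
      rw [AlgHom.commutes]
      exact Subalgebra.algebraMap_mem _ r
    | ι v =>
      rw [CliffordAlgebra.map_apply_ι]
      have hv : F0 v = v 0 • (e 0) + (v 1 • e 1 + (v 2 • e 2 + v 3 • e 3)) := by
        have hF : F0 v = ![v 0, v 1, v 2, v 3, 0] := rfl
        rw [hF]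
        funext k
        fin_cases k <;> simp [e, Pi.single_apply]
      rw [hv]
      simp only [map_add, map_smul]
      have h0 : ι Q (e 0) ∈ CGA₀ := Algebra.subset_adjoin (by simp)
      have h1 : ι Q (e 1) ∈ CGA₀ := Algebra.subset_adjoin (by simp)
      have h2 : ι Q (e 2) ∈ CGA₀ := Algebra.subset_adjoin (by simp)
      have h3 : ι Q (e 3) ∈ CGA₀ := Algebra.subset_adjoin (by simp)
      exact add_mem (SMulMemClass.smul_mem _ h0) (add_mem (SMulMemClass.smul_mem _ h1)
        (add_mem (SMulMemClass.smul_mem _ h2) (SMulMemClass.smul_mem _ h3)))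
    | mul a b ha hb =>
      rw [map_mul]
      exact mul_mem ha hb
    | add a b ha hb =>
      rw [map_add]
      exact add_mem ha hb
  · refine Algebra.adjoin_le ?_
    intro x hx
    simp only [Set.mem_insert_iff, Set.mem_singleton_iff] at hx
    rcases hx with h | h | h | h <;> subst h
    · exact ⟨ι QP (Pi.single 0 1), by
        show CliffordAlgebra.map F0 (ι QP (Pi.single 0 1)) = _
        rw [CliffordAlgebra.map_apply_ι, pad_single]
        rfl⟩
    · exact ⟨ι QP (Pi.single 1 1), by
        show CliffordAlgebra.map F0 (ι QP (Pi.single 1 1)) = _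
        rw [CliffordAlgebra.map_apply_ι, pad_single]
        rfl⟩
    · exact ⟨ι QP (Pi.single 2 1), by
        show CliffordAlgebra.map F0 (ι QP (Pi.single 2 1)) = _
        rw [CliffordAlgebra.map_apply_ι, pad_single]
        rfl⟩
    · exact ⟨ι QP (Pi.single 3 1), by
        show CliffordAlgebra.map F0 (ι QP (Pi.single 3 1)) = _
        rw [CliffordAlgebra.map_apply_ι, pad_single]
        rfl⟩


/-- There is an ℝ-algebra isomorphism from `PGA = CliffordAlgebra QP`
onto the subalgebra `CGA₀` of CGA sending `ι_P(eᵢ)` to `ι(eᵢ)` for `i = 0, 1, 2, 3`. -/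
theorem pga_iso_cga0 :
    ∃ f : CliffordAlgebra QP ≃ₐ[ℝ] CGA₀,
      ∀ i : Fin 4,
        ((f (ι QP (Pi.single i 1)) : CGA₀) : CliffordAlgebra Q) =
          ι Q (Pi.single (Fin.castLE (by norm_num) i) 1) := by
  refine ⟨(AlgEquiv.ofInjective _ mapF0_inj).trans
    (Subalgebra.equivOfEq _ _ range_mapF0), fun i => ?_⟩
  rw [AlgEquiv.trans_apply]
  have h1 : ((Subalgebra.equivOfEq _ _ range_mapF0
      ((AlgEquiv.ofInjective _ mapF0_inj) (ι QP (Pi.single i 1))) : CGA₀) :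
      CliffordAlgebra Q) =
      (((AlgEquiv.ofInjective _ mapF0_inj) (ι QP (Pi.single i 1)) :
        (CliffordAlgebra.map F0).range) : CliffordAlgebra Q) := rfl
  rw [h1, AlgEquiv.ofInjective_apply, CliffordAlgebra.map_apply_ι, pad_single]
end

section
/- (Line correspondence.) For all x₁, x₂ ∈ E = span{e₁, e₂, e₃}, the image under ♯ of the PGA line through the PGA points P(x₁), P(x₂) equals the CGA dual (IPNS) representation of that line: ♯(ℓ) = ((ι(v_{x₁}) ∧ ι(v_{x₂})) ∧ e∞) I_c⁻¹, where ℓ := (ι(e₀+x₁) ∧ ι(e₀+x₂))^{*_P} is the regressive product P(x₁) ∨ P(x₂) (using that P(xᵢ)^{*_P} = ι(e₀+xᵢ)), v_y := e₀ + y + ½Q(y)e∞, and for vectors u, w ∈ V, ι(u) ∧ ι(w) := ½(ι(u)ι(w) − ι(w)ι(u)). -/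
open CliffordAlgebra

/-- Outer (wedge) product of a multivector with a vector:
`A ∧ v := ½ (A ι(v) + ι(v) α(A))`, where `α` is the grade involution. -/
noncomputable def wedgeVec (A : CliffordAlgebra Q) (v : Fin 5 → ℝ) : CliffordAlgebra Q :=
  (1 / 2 : ℝ) • (A * ι Q v + ι Q v * involute A)

/-- The conformal pseudoscalar `I_c = (((e₀ ∧ e₁) ∧ e₂) ∧ e₃) ∧ e∞`. -/
noncomputable def Ic : CliffordAlgebra Q :=
  wedgeVec (wedgeVec (wedgeVec (wedgeVec (ι Q (e 0)) (e 1)) (e 2)) (e 3)) (e 4)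

/-- The conformal embedding `v_x = e₀ + x + ½ Q(x) e∞` of a Euclidean point `x`. -/
noncomputable def vpt (x : Fin 5 → ℝ) : Fin 5 → ℝ :=
  e 0 + x + (Q x / 2) • e 4

/-- The wedge product of two vectors: `ι(u) ∧ ι(w) := ½(ι(u)ι(w) − ι(w)ι(u))`. -/
noncomputable def wedge2 (u w : Fin 5 → ℝ) : CliffordAlgebra Q :=
  (1 / 2 : ℝ) • (ι Q u * ι Q w - ι Q w * ι Q u)

/-- The projective (PGA) dual `A^{*_P} := ♯((A ∧ e∞) I_c⁻¹)`, with `I_c⁻¹ = -I_c`,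
expressed relative to a realization `F` of the involution `♯` on the Clifford algebra
(i.e. `F` is the algebra endomorphism induced by the isometry `♯ : V → V`,
characterized by `F (ι v) = ι (♯ v)`). -/
noncomputable def dualP (F : CliffordAlgebra Q →ₐ[ℝ] CliffordAlgebra Q)
    (A : CliffordAlgebra Q) : CliffordAlgebra Q :=
  F (wedgeVec A (e 4) * (-Ic))

/-- `Q(e∞) = 0`. -/
lemma Q_e4 : Q (e 4) = 0 := by
  simp [Q, Bmat, e, Matrix.toQuadraticMap', LinearMap.BilinMap.toQuadraticMap,
    Matrix.toLinearMap₂'_apply, Fin.sum_univ_succ, Pi.single_apply, QuadraticMap.instFunLike]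
  simp [Matrix.toQuadraticForm', LinearMap.BilinMap.toQuadraticMap, Matrix.toLinearMap₂'_apply',
    Matrix.mulVec, dotProduct, Fin.sum_univ_succ, Pi.single_apply]

lemma iota_e4_sq : ι Q (e 4) * ι Q (e 4) = 0 := by
  rw [ι_sq_scalar, Q_e4, map_zero]

/-- Wedging `u ∧ e∞` again with `e∞` gives zero, since `ι(e∞)² = 0`. -/
lemma wedgeVec_wedge2_e4 (u : Fin 5 → ℝ) : wedgeVec (wedge2 u (e 4)) (e 4) = 0 := by
  have h1 : ∀ x : CliffordAlgebra Q, x * ι Q (e 4) * ι Q (e 4) = 0 := fun x => by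
    rw [mul_assoc, iota_e4_sq, mul_zero]
  have h2 : ∀ x : CliffordAlgebra Q, ι Q (e 4) * (ι Q (e 4) * x) = 0 := fun x => by
    rw [← mul_assoc, iota_e4_sq, zero_mul]
  simp only [wedgeVec, wedge2, map_smul, map_sub, map_mul, involute_ι, neg_mul_neg,
    smul_mul_assoc, mul_smul_comm, sub_mul, mul_sub, h1, h2, zero_sub, sub_zero,
    mul_assoc]
  module

lemma wedgeVec_add (A B : CliffordAlgebra Q) (v : Fin 5 → ℝ) :
    wedgeVec (A + B) v = wedgeVec A v + wedgeVec B v := by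
  simp only [wedgeVec, map_add, add_mul, mul_add]
  module

lemma wedgeVec_smul (c : ℝ) (A : CliffordAlgebra Q) (v : Fin 5 → ℝ) :
    wedgeVec (c • A) v = c • wedgeVec A v := by
  simp only [wedgeVec, map_smul, smul_mul_assoc, mul_smul_comm]
  module

lemma wedge2_add_left (a b w : Fin 5 → ℝ) :
    wedge2 (a + b) w = wedge2 a w + wedge2 b w := by
  simp only [wedge2, map_add, add_mul, mul_add]
  module

lemma wedge2_add_right (a b w : Fin 5 → ℝ) :
    wedge2 w (a + b) = wedge2 w a + wedge2 w b := by
  simp only [wedge2, map_add, add_mul, mul_add]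
  module

lemma wedge2_smul_left (c : ℝ) (a w : Fin 5 → ℝ) :
    wedge2 (c • a) w = c • wedge2 a w := by
  simp only [wedge2, map_smul, smul_mul_assoc, mul_smul_comm]
  module

lemma wedge2_smul_right (c : ℝ) (a w : Fin 5 → ℝ) :
    wedge2 w (c • a) = c • wedge2 w a := by
  simp only [wedge2, map_smul, smul_mul_assoc, mul_smul_comm]
  module

lemma wedge2_swap (u w : Fin 5 → ℝ) : wedge2 u w = - wedge2 w u := by
  simp only [wedge2]
  module

lemma wedgeVec_neg (A : CliffordAlgebra Q) (v : Fin 5 → ℝ) :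
    wedgeVec (-A) v = - wedgeVec A v := by
  simp only [wedgeVec, map_neg, neg_mul, mul_neg]
  module

/-- `♯` is an involution on `V`. -/
lemma sharpV_sharpV (v : Fin 5 → ℝ) : sharpV (sharpV v) = v := by
  funext i
  by_cases h : i = 0 <;> by_cases h' : i = 4 <;> simp [sharpV, h, h']

/-- The realization `F` of `♯` on the Clifford algebra is an involution. -/
lemma FF (F : CliffordAlgebra Q →ₐ[ℝ] CliffordAlgebra Q)
    (hF : ∀ v : Fin 5 → ℝ, F (ι Q v) = ι Q (sharpV v)) (X : CliffordAlgebra Q) :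
    F (F X) = X := by
  induction X using CliffordAlgebra.induction with
  | algebraMap r => simp
  | ι v => rw [hF, hF, sharpV_sharpV]
  | mul a b ha hb => rw [map_mul, map_mul, ha, hb]
  | add a b ha hb => rw [map_add, map_add, ha, hb]

lemma wedgeVec_wedge2_e4' (u : Fin 5 → ℝ) : wedgeVec (wedge2 (e 4) u) (e 4) = 0 := by
  rw [wedge2_swap, wedgeVec_neg, wedgeVec_wedge2_e4, neg_zero]

/-- (Line correspondence.) For `x₁, x₂ ∈ span{e₁,e₂,e₃}`, the PGA line
`ℓ = P(x₁) ∨ P(x₂) = (ι(e₀+x₁) ∧ ι(e₀+x₂))^{*_P}` satisfies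
`♯ℓ = ((ι(v_{x₁}) ∧ ι(v_{x₂})) ∧ e∞) I_c⁻¹`. -/
theorem sharp_line_correspondence (F : CliffordAlgebra Q →ₐ[ℝ] CliffordAlgebra Q)
    (hF : ∀ v : Fin 5 → ℝ, F (ι Q v) = ι Q (sharpV v)) :
    ∀ x₁ x₂ : Fin 5 → ℝ, x₁ 0 = 0 → x₁ 4 = 0 → x₂ 0 = 0 → x₂ 4 = 0 →
      F (dualP F (wedge2 (e 0 + x₁) (e 0 + x₂))) =
        wedgeVec (wedge2 (vpt x₁) (vpt x₂)) (e 4) * (-Ic) := by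
  intro x₁ x₂ _ _ _ _
  have key : wedgeVec (wedge2 (vpt x₁) (vpt x₂)) (e 4) =
      wedgeVec (wedge2 (e 0 + x₁) (e 0 + x₂)) (e 4) := by
    have h1 : vpt x₁ = (e 0 + x₁) + (Q x₁ / 2) • e 4 := rfl
    have h2 : vpt x₂ = (e 0 + x₂) + (Q x₂ / 2) • e 4 := rfl
    rw [h1, h2]
    simp only [wedge2_add_left, wedge2_add_right, wedge2_smul_left, wedge2_smul_right,
      wedgeVec_add, wedgeVec_smul, wedgeVec_wedge2_e4, wedgeVec_wedge2_e4',
      smul_zero, add_zero, zero_add]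
  rw [dualP, FF F hF, key]
end
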